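/- arXiv:2308.02001 — 4 statements merged into one kernel-verified Lean document; each statement's English description precedes it below -/
import Mathlib

section
/- For $A\in\mathbb{R}^{m\times d}$, $B\in\mathbb{R}^{n\times d}$, and $k\in\mathbb{N}$, the rank of the Hadamard power $(AB^T)^{(k)}$ equals $\min\{m,n,\binom{k+d-1}{k}\}$ for generic $(A,B)$, i.e., for all $(A,B)$ outside the zero set of a non-identically-zero polynomial. -/
open Matrix MvPolynomial

/-- The product of the multiset of variables equals the corresponding monomial. -/
lemma multiset_map_X_prod {d : ℕ} (s : Multiset (Fin d)) :
    ((s.map (X : Fin d → MvPolynomial (Fin d) ℝ)).prod)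
      = monomial (Multiset.toFinsupp s) (1 : ℝ) := by
  induction s using Multiset.induction_on with
  | empty => simp
  | cons a s ih =>
    rw [Multiset.map_cons, Multiset.prod_cons, ih, ← Multiset.singleton_add,
      Multiset.toFinsupp_add, Multiset.toFinsupp_singleton, X,
      monomial_mul, one_mul]

/-- The monomial functions of degree `k` in `d` variables are linearly independent. -/
lemma funcs_linearIndependent (d k : ℕ) :
    LinearIndependent ℝ (fun (μ : Sym (Fin d) k) (x : Fin d → ℝ) =>
      ((μ : Multiset (Fin d)).map x).prod) := by
  let E : MvPolynomial (Fin d) ℝ →ₗ[ℝ] ((Fin d → ℝ) → ℝ) :=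
    { toFun := fun p x => eval x p
      map_add' := fun p q => funext fun x => by simp
      map_smul' := fun c p => funext fun x => by simp }
  have hE : LinearMap.ker E = ⊥ := by
    rw [LinearMap.ker_eq_bot']
    intro p hp
    apply MvPolynomial.funext (q := 0)
    intro x
    simpa [E] using congrFun hp x
  have hinj : Function.Injective (fun μ : Sym (Fin d) k =>
      Multiset.toFinsupp (μ : Multiset (Fin d))) := by
    intro μ ν h
    exact Sym.coe_injective (Multiset.toFinsupp.injective h)
  have hmono : LinearIndependent ℝ (fun μ : Sym (Fin d) k =>
      (monomial (Multiset.toFinsupp (μ : Multiset (Fin d))) (1:ℝ)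
        : MvPolynomial (Fin d) ℝ)) := by
    have hb := (MvPolynomial.basisMonomials (Fin d) ℝ).linearIndependent
    have := hb.comp _ hinj
    exact this
  have := hmono.map' E hE
  convert this using 1
  funext μ
  show _ = E (monomial (Multiset.toFinsupp (μ : Multiset (Fin d))) (1:ℝ))
  rw [← multiset_map_X_prod]
  funext x
  show ((μ : Multiset (Fin d)).map x).prod
      = eval x (((μ : Multiset (Fin d)).map X).prod)
  rw [map_multiset_prod, Multiset.map_map]
  simp [Function.comp]
  all_goals rfl

/-- There exist `r` points whose degree-`k` monomial evaluation vectors are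
linearly independent, provided `r ≤ card (Sym (Fin d) k)`. -/
lemma exists_points (d k r : ℕ) (hr : r ≤ Fintype.card (Sym (Fin d) k)) :
    ∃ x : Fin r → (Fin d → ℝ), LinearIndependent ℝ
      (fun i : Fin r => fun μ : Sym (Fin d) k =>
        ((μ : Multiset (Fin d)).map (x i)).prod) := by
  classical
  set S := Sym (Fin d) k
  let w : (Fin d → ℝ) → (S → ℝ) := fun x μ => ((μ : Multiset (Fin d)).map x).prod
  have hspan : Submodule.span ℝ (Set.range w) = ⊤ := by
    by_contra hne
    obtain ⟨φ, hφ0, hφ⟩ := Submodule.exists_dual_map_eq_bot_of_lt_top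
      (lt_top_iff_ne_top.2 hne) inferInstance
    have hkill : ∀ x, φ (w x) = 0 := by
      intro x
      have : φ (w x) ∈ Submodule.map φ (Submodule.span ℝ (Set.range w)) :=
        Submodule.mem_map_of_mem (Submodule.subset_span ⟨x, rfl⟩)
      rw [hφ] at this
      simpa using this
    set c : S → ℝ := fun μ => φ (fun ν => if μ = ν then 1 else 0) with hc
    have hrep : ∀ v : S → ℝ, φ v = ∑ μ : S, v μ * c μ :=
      fun v => LinearMap.pi_apply_eq_sum_univ φ v
    have hczero : ∀ μ, c μ = 0 := by
      have hli := funcs_linearIndependent d k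
      rw [Fintype.linearIndependent_iff] at hli
      apply hli
      funext x
      have := hkill x
      rw [hrep] at this
      simpa [mul_comm, Finset.sum_apply] using this
    refine hφ0 (LinearMap.ext fun v => ?_)
    rw [hrep]
    simp [hczero]
  obtain ⟨b, hbsub, hbspan, hbli⟩ := exists_linearIndependent ℝ (Set.range w)
  rw [hspan] at hbspan
  have hbfin : b.Finite := hbli.setFinite
  haveI : Fintype b := hbfin.fintype
  have hbasis : Fintype.card (Sym (Fin d) k) = Fintype.card b := by
    let bb : Module.Basis b ℝ (S → ℝ) := Module.Basis.mk hbli (by rw [Subtype.range_coe, hbspan])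
    have := Module.finrank_eq_card_basis bb
    rw [Module.finrank_fintype_fun_eq_card] at this
    exact this
  have hcard : r ≤ Fintype.card b := hbasis ▸ hr
  obtain ⟨e⟩ := Function.Embedding.nonempty_of_card_le
    ((Fintype.card_fin r).trans_le hcard)
  have hmem : ∀ i : Fin r, ((e i : S → ℝ)) ∈ Set.range w := fun i => hbsub (e i).2
  choose x hx using hmem
  refine ⟨x, ?_⟩
  have : (fun i : Fin r => w (x i)) = fun i => ((e i : S → ℝ)) := funext fun i => hx i
  have hli' : LinearIndependent ℝ (fun i : Fin r => ((e i : S → ℝ))) :=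
    hbli.comp e e.injective
  exact this ▸ hli'

/-- Multinomial expansion of a power of a dot product. -/
lemma entry_expand {d : ℕ} (k : ℕ) (a b : Fin d → ℝ) :
    (∑ l, a l * b l) ^ k = ∑ μ : Sym (Fin d) k,
      ((μ : Multiset (Fin d)).countPerms : ℝ) *
        (((μ : Multiset (Fin d)).map a).prod * ((μ : Multiset (Fin d)).map b).prod) := by
  rw [show (∑ l, a l * b l) = Finset.univ.sum (fun l => a l * b l) from rfl,
    Finset.sum_pow, Finset.sym_univ]
  apply Finset.sum_congr rfl
  intro μ _
  rw [Multiset.prod_map_mul]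
  rfl

/-- The weighted Gram matrix of linearly independent monomial evaluation vectors
has nonzero determinant. -/
lemma gram_det_ne_zero {d k r : ℕ} (x : Fin r → (Fin d → ℝ))
    (hli : LinearIndependent ℝ (fun i : Fin r => fun μ : Sym (Fin d) k =>
      ((μ : Multiset (Fin d)).map (x i)).prod)) :
    (Matrix.of (fun i j : Fin r => ∑ μ : Sym (Fin d) k,
      ((μ : Multiset (Fin d)).countPerms : ℝ) *
        (((μ : Multiset (Fin d)).map (x i)).prod *
          ((μ : Multiset (Fin d)).map (x j)).prod))).det ≠ 0 := by
  classical
  set S := Sym (Fin d) k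
  set w : Fin r → S → ℝ := fun i μ => ((μ : Multiset (Fin d)).map (x i)).prod with hw
  set G : Matrix (Fin r) (Fin r) ℝ := Matrix.of (fun i j : Fin r => ∑ μ : S,
      ((μ : Multiset (Fin d)).countPerms : ℝ) * (w i μ * w j μ)) with hG
  intro hdet
  obtain ⟨c, hc0, hcv⟩ := Matrix.exists_mulVec_eq_zero_iff.2 hdet
  have key : ∑ μ : S, ((μ : Multiset (Fin d)).countPerms : ℝ) *
      (∑ i, c i * w i μ) ^ 2 = c ⬝ᵥ G.mulVec c := by
    simp only [dotProduct, Matrix.mulVec, dotProduct, hG, Matrix.of_apply,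
      Finset.mul_sum, Finset.sum_mul, sq]
    rw [Finset.sum_comm]
    apply Finset.sum_congr rfl
    intro i _
    rw [Finset.sum_comm]
    apply Finset.sum_congr rfl
    intro j _
    apply Finset.sum_congr rfl
    intro μ _
    ring
  rw [hcv] at key
  simp only [dotProduct_zero] at key
  have hzero : ∀ μ : S, ((μ : Multiset (Fin d)).countPerms : ℝ) *
      (∑ i, c i * w i μ) ^ 2 = 0 := by
    have := (Finset.sum_eq_zero_iff_of_nonneg (fun μ _ =>
      mul_nonneg (Nat.cast_nonneg _) (sq_nonneg _))).1 key
    exact fun μ => this μ (Finset.mem_univ μ)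
  have hy : ∀ μ : S, ∑ i, c i * w i μ = 0 := by
    intro μ
    have hm : ((μ : Multiset (Fin d)).countPerms : ℝ) ≠ 0 := by
      have hpos : (0:ℕ) < (μ : Multiset (Fin d)).countPerms := Nat.multinomial_pos _ _
      exact_mod_cast hpos.ne'
    have := hzero μ
    rcases mul_eq_zero.1 this with h | h
    · exact absurd h hm
    · exact pow_eq_zero_iff (by norm_num) |>.1 h
  have := Fintype.linearIndependent_iff.1 hli c
  exact hc0 (funext fun i => this (funext fun μ => by
    simpa [Finset.sum_apply, mul_comm] using hy μ) i)

/-- Rank of an arbitrary submatrix is at most the rank. -/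
lemma rank_submatrix_le'' {m n r : ℕ} (M : Matrix (Fin m) (Fin n) ℝ)
    (u : Fin r → Fin m) (v : Fin r → Fin n) :
    (M.submatrix u v).rank ≤ M.rank := by
  have h1 : M.submatrix u id =
      ((1 : Matrix (Fin m) (Fin m) ℝ).submatrix u (Equiv.refl (Fin m))) * M := by
    rw [Matrix.one_submatrix_mul]
    simp
  have h2 : M.submatrix u v = (M.submatrix u id) *
      ((1 : Matrix (Fin n) (Fin n) ℝ).submatrix (Equiv.refl (Fin n)) v) := by
    rw [Matrix.mul_submatrix_one]
    simp [Matrix.submatrix_submatrix]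
  calc (M.submatrix u v).rank
      ≤ (M.submatrix u id).rank := by rw [h2]; exact Matrix.rank_mul_le_left _ _
    _ ≤ M.rank := by rw [h1]; exact Matrix.rank_mul_le_right _ _

/-- Generic rank of the Hadamard power: the rank of `(A Bᵀ)^(k)` (entrywise
`k`-th power) equals `min {m, n, C(k+d-1, k)}` for all `(A, B)` outside the
zero set of some non-identically-zero polynomial. -/
theorem stmt7 (m n d k : ℕ) :
    ∃ p : MvPolynomial ((Fin m × Fin d) ⊕ (Fin n × Fin d)) ℝ, p ≠ 0 ∧
      ∀ (A : Matrix (Fin m) (Fin d) ℝ) (B : Matrix (Fin n) (Fin d) ℝ),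
        MvPolynomial.eval
            (Sum.elim (fun q => A q.1 q.2) (fun q => B q.1 q.2)) p ≠ 0 →
          (Matrix.of fun i j => ((A * B.transpose) i j) ^ k).rank =
            min m (min n ((k + d - 1).choose k)) := by
  classical
  set N := Fintype.card (Sym (Fin d) k) with hN
  have hNval : N = (k + d - 1).choose k := by
    rw [hN, Sym.card_sym_eq_choose, Fintype.card_fin, Nat.add_comm d k]
  set r := min m (min n N) with hr
  have hrm : r ≤ m := min_le_left _ _
  have hrn : r ≤ n := le_trans (min_le_right _ _) (min_le_left _ _)
  have hrN : r ≤ N := le_trans (min_le_right _ _) (min_le_right _ _)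
  set u : Fin r → Fin m := Fin.castLE hrm with hu
  set v : Fin r → Fin n := Fin.castLE hrn with hv
  set Ppoly : Matrix (Fin r) (Fin r)
      (MvPolynomial ((Fin m × Fin d) ⊕ (Fin n × Fin d)) ℝ) :=
    Matrix.of (fun i j => (∑ l : Fin d,
      X (Sum.inl (u i, l)) * X (Sum.inr (v j, l))) ^ k) with hP
  refine ⟨Ppoly.det, ?_, ?_⟩
  case _ =>
    -- nonvanishing: evaluate at witness points
    obtain ⟨x, hli⟩ := exists_points d k r hrN
    set A₀ : Matrix (Fin m) (Fin d) ℝ :=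
      Matrix.of (fun i l => if h : (i : ℕ) < r then x ⟨i, h⟩ l else 0) with hA
    set B₀ : Matrix (Fin n) (Fin d) ℝ :=
      Matrix.of (fun j l => if h : (j : ℕ) < r then x ⟨j, h⟩ l else 0) with hB
    intro hp0
    have heval : MvPolynomial.eval
        (Sum.elim (fun q : Fin m × Fin d => A₀ q.1 q.2)
          (fun q : Fin n × Fin d => B₀ q.1 q.2)) Ppoly.det =
      (Matrix.of (fun i j : Fin r => ∑ μ : Sym (Fin d) k,
        ((μ : Multiset (Fin d)).countPerms : ℝ) *
          (((μ : Multiset (Fin d)).map (x i)).prod *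
            ((μ : Multiset (Fin d)).map (x j)).prod))).det := by
      rw [RingHom.map_det]
      congr 1
      ext i j
      simp only [RingHom.mapMatrix_apply, Matrix.map_apply, hP, Matrix.of_apply,
        map_pow, map_sum, _root_.map_mul, MvPolynomial.eval_X, Sum.elim_inl, Sum.elim_inr]
      have hAu : ∀ l, A₀ (u i) l = x i l := by
        intro l
        have hil : ((u i : Fin m) : ℕ) < r := by
          simp [hu, Fin.coe_castLE, i.isLt]
        simp only [hA, Matrix.of_apply, dif_pos hil]
        congr 1
      have hBv : ∀ l, B₀ (v j) l = x j l := by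
        intro l
        have hjl : ((v j : Fin n) : ℕ) < r := by
          simp [hv, Fin.coe_castLE, j.isLt]
        simp only [hB, Matrix.of_apply, dif_pos hjl]
        congr 1
      simp only [hAu, hBv]
      exact entry_expand k (x i) (x j)
    have := gram_det_ne_zero x hli
    rw [← heval] at this
    rw [hp0] at this
    simp at this
  case _ =>
    intro A B hpAB
    set M : Matrix (Fin m) (Fin n) ℝ :=
      Matrix.of (fun i j => ((A * B.transpose) i j) ^ k) with hM
    -- evaluation of the polynomial determinant
    have heval : MvPolynomial.eval
        (Sum.elim (fun q : Fin m × Fin d => A q.1 q.2)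
          (fun q : Fin n × Fin d => B q.1 q.2)) Ppoly.det =
        (M.submatrix u v).det := by
      rw [RingHom.map_det]
      congr 1
      ext i j
      simp only [RingHom.mapMatrix_apply, Matrix.map_apply, hP, Matrix.of_apply,
        map_pow, map_sum, _root_.map_mul, MvPolynomial.eval_X, Sum.elim_inl, Sum.elim_inr,
        Matrix.submatrix_apply, hM, Matrix.mul_apply, Matrix.transpose_apply]
    rw [heval] at hpAB
    -- lower bound
    have hlow : r ≤ M.rank := by
      have hunit : IsUnit (M.submatrix u v) := by
        rw [Matrix.isUnit_iff_isUnit_det]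
        exact isUnit_iff_ne_zero.2 hpAB
      have := Matrix.rank_of_isUnit _ hunit
      rw [Fintype.card_fin] at this
      calc r = (M.submatrix u v).rank := this.symm
        _ ≤ M.rank := rank_submatrix_le'' M u v
    -- upper bounds
    have hub1 : M.rank ≤ m := Matrix.rank_le_height M
    have hub2 : M.rank ≤ n := Matrix.rank_le_width M
    have hub3 : M.rank ≤ N := by
      set Φ : Matrix (Fin m) (Sym (Fin d) k) ℝ :=
        Matrix.of (fun i μ => ((μ : Multiset (Fin d)).countPerms : ℝ) *
          ((μ : Multiset (Fin d)).map (A i)).prod) with hΦ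
      set Ψ : Matrix (Fin n) (Sym (Fin d) k) ℝ :=
        Matrix.of (fun j μ => ((μ : Multiset (Fin d)).map (B j)).prod) with hΨ
      have hfac : M = Φ * Ψᵀ := by
        ext i j
        simp only [hM, Matrix.of_apply, Matrix.mul_apply, Matrix.transpose_apply,
          hΦ, hΨ]
        rw [entry_expand k (A i) (B j)]
        apply Finset.sum_congr rfl
        intro μ _
        ring
      calc M.rank = (Φ * Ψᵀ).rank := by rw [hfac]
        _ ≤ Φ.rank := Matrix.rank_mul_le_left _ _
        _ ≤ Fintype.card (Sym (Fin d) k) := Matrix.rank_le_card_width Φ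
        _ = N := rfl
    have : M.rank = r := le_antisymm (le_min hub1 (le_min hub2 hub3)) hlow
    rw [this, hr, hNval]
end

section
/- For $A\in\mathbb{R}^{m\times d}$, $B\in\mathbb{R}^{n\times d}$, $K\in\mathbb{N}$, and real coefficients $c_0,\dots,c_K$, the rank of $\sum_{k=0}^{K}c_k(AB^T)^{(k)}$ equals $\min\{m,\,n,\,\sum_{k=0}^{K}\mathbb{1}[c_k\ne0]\binom{k+d-1}{k}\}$ for generic $(A,B)$. -/
open Finset Matrix Module Submodule

noncomputable section StmtAux8

/-- The entrywise monomial feature. -/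
def auxu {d : ℕ} (a : Fin d → ℝ) (α : Fin d → ℕ) : ℝ := ∏ l, a l ^ α l

/-- The diagonal coefficient. -/
def auxdc (c : ℕ → ℝ) {d : ℕ} (α : Fin d → ℕ) : ℝ :=
  c (∑ l, α l) * (Nat.multinomial Finset.univ α : ℝ)

open Classical in
/-- The index set of "active" monomials. -/
def auxS (c : ℕ → ℝ) (d K : ℕ) : Finset (Fin d → ℕ) :=
  (Finset.range (K + 1)).biUnion fun k =>
    if c k ≠ 0 then Finset.piAntidiag Finset.univ k else ∅

lemma card_piAntidiag_univ (d k : ℕ) :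
    (Finset.piAntidiag (Finset.univ : Finset (Fin d)) k).card = (k + d - 1).choose k := by
  classical
  rw [← Finset.map_sym_eq_piAntidiag, Finset.card_map, Finset.sym_univ, Finset.card_univ,
    Sym.card_sym_eq_choose, Fintype.card_fin, Nat.add_comm]

open Classical in
lemma card_auxS (c : ℕ → ℝ) (d K : ℕ) :
    (auxS c d K).card
      = ∑ k ∈ Finset.range (K + 1), if c k ≠ 0 then (k + d - 1).choose k else 0 := by
  rw [auxS, Finset.card_biUnion]
  · refine Finset.sum_congr rfl fun k _ => ?_
    split_ifs with h
    · simp [h, card_piAntidiag_univ]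
    · simp [h]
  · intro x _ y _ hxy
    rw [Function.onFun, Finset.disjoint_left]
    intro a ha ha'
    apply hxy
    split_ifs at ha ha' with h1 h2
    · exact (Finset.mem_piAntidiag.mp ha).1.symm.trans (Finset.mem_piAntidiag.mp ha').1
    all_goals simp_all

open Classical in
lemma mem_auxS {c : ℕ → ℝ} {d K : ℕ} {α : Fin d → ℕ} (h : α ∈ auxS c d K) :
    (∑ l, α l) ≤ K ∧ c (∑ l, α l) ≠ 0 := by
  rw [auxS, Finset.mem_biUnion] at h
  obtain ⟨k, hk, hmem⟩ := h
  split_ifs at hmem with h1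
  · obtain ⟨hsum, -⟩ := Finset.mem_piAntidiag.mp hmem
    rw [show (∑ l, α l) = k from hsum]
    exact ⟨Nat.lt_succ_iff.mp (Finset.mem_range.mp hk), h1⟩
  · simp at hmem

open Classical in
lemma factor_aux {d K : ℕ} {c : ℕ → ℝ} (m n : ℕ)
    (A : Matrix (Fin m) (Fin d) ℝ) (B : Matrix (Fin n) (Fin d) ℝ)
    (i : Fin m) (j : Fin n) :
    ∑ k ∈ Finset.range (K + 1), c k * ((A * Bᵀ) i j) ^ k
      = ∑ α ∈ auxS c d K, auxu (A i) α * (auxdc c α * auxu (B j) α) := by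
  have hab : (A * Bᵀ) i j = ∑ l, A i l * B j l := by
    simp [Matrix.mul_apply]
  rw [hab]
  have step1 : ∀ k, (∑ l, A i l * B j l) ^ k
      = ∑ α ∈ Finset.piAntidiag Finset.univ k,
          (Nat.multinomial Finset.univ α : ℝ) * ∏ l, (A i l * B j l) ^ α l :=
    fun k => Finset.sum_pow_eq_sum_piAntidiag Finset.univ _ k
  calc ∑ k ∈ Finset.range (K + 1), c k * (∑ l, A i l * B j l) ^ k
      = ∑ k ∈ Finset.range (K + 1), ∑ α ∈ Finset.piAntidiag Finset.univ k,
          auxu (A i) α * (auxdc c α * auxu (B j) α) := by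
        refine Finset.sum_congr rfl fun k _ => ?_
        rw [step1, Finset.mul_sum]
        refine Finset.sum_congr rfl fun α hα => ?_
        have hsum : (∑ l, α l) = k := (Finset.mem_piAntidiag.mp hα).1
        have hprod : ∏ l, (A i l * B j l) ^ α l
            = (∏ l, A i l ^ α l) * ∏ l, B j l ^ α l := by
          rw [← Finset.prod_mul_distrib]
          exact Finset.prod_congr rfl fun l _ => mul_pow _ _ _
        rw [hprod, auxu, auxdc, auxu, hsum]
        ring
    _ = ∑ k ∈ Finset.range (K + 1),
          ∑ α ∈ (if c k ≠ 0 then Finset.piAntidiag Finset.univ k else ∅),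
          auxu (A i) α * (auxdc c α * auxu (B j) α) := by
        refine Finset.sum_congr rfl fun k _ => ?_
        split_ifs with h
        · rfl
        · push_neg at h
          rw [Finset.sum_empty]
          refine Finset.sum_eq_zero fun α hα => ?_
          have hsum : (∑ l, α l) = k := (Finset.mem_piAntidiag.mp hα).1
          rw [auxdc, hsum, h]
          ring
    _ = ∑ α ∈ auxS c d K, auxu (A i) α * (auxdc c α * auxu (B j) α) := by
        rw [auxS, Finset.sum_biUnion]
        intro x _ y _ hxy
        simp only [Function.onFun]
        rw [Finset.disjoint_left]
        intro a ha ha'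
        split_ifs at ha ha' with h1 h2
        · exact hxy ((Finset.mem_piAntidiag.mp ha).1.symm.trans (Finset.mem_piAntidiag.mp ha').1)
        all_goals simp_all

/-- The entrywise polynomial of `A * Bᵀ` factors through the active monomials. -/
lemma factor {d K : ℕ} {c : ℕ → ℝ} (m n : ℕ)
    (A : Matrix (Fin m) (Fin d) ℝ) (B : Matrix (Fin n) (Fin d) ℝ) :
    (Matrix.of fun i j => ∑ k ∈ Finset.range (K + 1), c k * ((A * Bᵀ) i j) ^ k)
      = (Matrix.of fun (i : Fin m) (α : ↥(auxS c d K)) => auxu (A i) α.1)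
        * (Matrix.of fun (α : ↥(auxS c d K)) (j : Fin n) => auxdc c α.1 * auxu (B j) α.1) := by
  ext i j
  rw [Matrix.mul_apply]
  simp only [Matrix.of_apply]
  rw [factor_aux m n A B i j, ← Finset.sum_coe_sort (auxS c d K)]

/-- Monomial feature vectors span the full coordinate space. -/
lemma span_auxu_top {d : ℕ} (S : Finset (Fin d → ℕ)) :
    Submodule.span ℝ (Set.range fun a : Fin d → ℝ => fun α : ↥S => auxu a α.1) = ⊤ := by
  by_contra h
  obtain ⟨f, hf0, hker⟩ :=
    Submodule.exists_dual_map_eq_bot_of_lt_top (lt_top_iff_ne_top.mpr h) inferInstance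
  set t : ↥S → ℝ := fun α => f (fun β => if α = β then 1 else 0) with ht
  have hft : ∀ x : ↥S → ℝ, f x = ∑ α, x α * t α := by
    intro x
    rw [LinearMap.pi_apply_eq_sum_univ f x]
    simp [ht, smul_eq_mul]
  have hzero : ∀ a : Fin d → ℝ, ∑ α : ↥S, auxu a α.1 * t α = 0 := by
    intro a
    have hmem : (fun α : ↥S => auxu a α.1)
        ∈ Submodule.span ℝ (Set.range fun a : Fin d → ℝ => fun α : ↥S => auxu a α.1) :=
      Submodule.subset_span ⟨a, rfl⟩
    have h2 : f (fun α : ↥S => auxu a α.1) = 0 := by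
      have h3 := Submodule.mem_map_of_mem (f := f) hmem
      rw [hker] at h3
      simpa using h3
    rw [hft] at h2
    exact h2
  set q : MvPolynomial (Fin d) ℝ :=
    ∑ α : ↥S, MvPolynomial.monomial (Finsupp.equivFunOnFinite.symm α.1) (t α) with hq
  have hqeval : ∀ a : Fin d → ℝ, MvPolynomial.eval a q = 0 := by
    intro a
    rw [hq, map_sum, ← hzero a]
    refine Finset.sum_congr rfl fun α _ => ?_
    rw [MvPolynomial.eval_monomial, Finsupp.prod_pow]
    simp only [Finsupp.coe_equivFunOnFinite_symm]
    rw [auxu, mul_comm]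
  have hq0 : q = 0 := MvPolynomial.funext (by simpa using hqeval)
  have htz : ∀ α : ↥S, t α = 0 := by
    intro α
    have hc := congrArg (MvPolynomial.coeff (Finsupp.equivFunOnFinite.symm α.1)) hq0
    rw [MvPolynomial.coeff_zero, hq, MvPolynomial.coeff_sum] at hc
    rw [← hc]
    rw [Finset.sum_eq_single α]
    · rw [MvPolynomial.coeff_monomial, if_pos rfl]
    · intro β _ hβα
      rw [MvPolynomial.coeff_monomial, if_neg]
      intro heq
      exact hβα (Subtype.ext (Finsupp.equivFunOnFinite.symm.injective heq))
    · intro hα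
      exact absurd (Finset.mem_univ α) hα
  apply hf0
  apply LinearMap.ext
  intro x
  rw [hft]
  simp [htz]

/-- From a family whose span has dimension ≥ r, extract r independent members. -/
lemma exists_comp_linearIndependent {V : Type*} [AddCommGroup V] [Module ℝ V]
    [FiniteDimensional ℝ V] {ι : Type*} (v : ι → V) {r : ℕ}
    (hr : r ≤ Module.finrank ℝ (Submodule.span ℝ (Set.range v))) :
    ∃ g : Fin r → ι, LinearIndependent ℝ (v ∘ g) := by
  obtain ⟨b, hbsub, hbspan, hbind⟩ := exists_linearIndependent ℝ (Set.range v)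
  have hbfin : b.Finite := hbind.setFinite
  haveI : Fintype b := hbfin.fintype
  have hcard : Module.finrank ℝ (Submodule.span ℝ b) = b.toFinset.card :=
    finrank_span_set_eq_card hbind
  have hr' : r ≤ b.toFinset.card := by
    rw [← hcard, hbspan]; exact hr
  let e := b.toFinset.equivFin
  let F : Fin r → b := fun j =>
    ⟨(e.symm (Fin.castLE hr' j) : V), Set.mem_toFinset.mp (e.symm (Fin.castLE hr' j)).2⟩
  have hFinj : Function.Injective F := by
    intro j j' hjj
    have hv : (F j : V) = (F j' : V) := congrArg Subtype.val hjj
    have h1 : e.symm (Fin.castLE hr' j) = e.symm (Fin.castLE hr' j') := Subtype.ext hv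
    have h2 := e.symm.injective h1
    exact Fin.castLE_injective hr' h2
  have hind : LinearIndependent ℝ (fun j => (F j : V)) := hbind.comp F hFinj
  have hsel : ∀ j : Fin r, ∃ i : ι, v i = (F j : V) := fun j => hbsub (F j).2
  choose g hg using hsel
  refine ⟨g, ?_⟩
  have : v ∘ g = fun j => (F j : V) := funext fun j => hg j
  rw [this]
  exact hind

/-- The rank of a submatrix is at most the rank. -/
lemma rank_submatrix_le''_s8 {m₁ n₁ r₁ r₂ : ℕ} (M : Matrix (Fin m₁) (Fin n₁) ℝ)
    (f : Fin r₁ → Fin m₁) (g : Fin r₂ → Fin n₁) :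
    (M.submatrix f g).rank ≤ M.rank := by
  classical
  have h1 : M.submatrix f g
      = (Matrix.of fun (i : Fin r₁) (k : Fin m₁) => if f i = k then (1 : ℝ) else 0) * M
        * (Matrix.of fun (k : Fin n₁) (j : Fin r₂) => if k = g j then (1 : ℝ) else 0) := by
    ext i j
    simp [Matrix.mul_apply, ite_mul, mul_ite]
  rw [h1]
  exact le_trans (Matrix.rank_mul_le_left _ _) (Matrix.rank_mul_le_right _ _)

/-- A matrix of rank ≥ r has an invertible r × r submatrix. -/
lemma exists_submatrix_det_ne_zero {m₁ n₁ : ℕ} (M : Matrix (Fin m₁) (Fin n₁) ℝ) {r : ℕ}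
    (hr : r ≤ M.rank) :
    ∃ f : Fin r → Fin m₁, ∃ g : Fin r → Fin n₁, (M.submatrix f g).det ≠ 0 := by
  have h1 : r ≤ Module.finrank ℝ (Submodule.span ℝ (Set.range Mᵀ)) := by
    rw [Matrix.rank_eq_finrank_span_cols] at hr; exact hr
  obtain ⟨g, hg⟩ := exists_comp_linearIndependent Mᵀ h1
  set N := M.submatrix id g with hN
  have hNT : Nᵀ = Matrix.of fun j i => (Mᵀ ∘ g) j i := by
    ext j i; rfl
  have hrankN : N.rank = r := by
    rw [← Matrix.rank_transpose, hNT]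
    have := hg.rank_matrix (M := Matrix.of fun j i => (Mᵀ ∘ g) j i)
    rw [this, Fintype.card_fin]
  have h2 : r ≤ Module.finrank ℝ (Submodule.span ℝ (Set.range N)) := by
    have := N.rank_eq_finrank_span_row; rw [hrankN] at this; exact this.le
  obtain ⟨f, hf⟩ := exists_comp_linearIndependent N h2
  refine ⟨f, g, ?_⟩
  have heq : (M.submatrix f g : Fin r → Fin r → ℝ) = N ∘ f := by
    ext i j; rfl
  have hu : IsUnit (M.submatrix f g) :=
    Matrix.linearIndependent_rows_iff_isUnit.mp (by rw [heq]; exact hf)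
  exact ((Matrix.isUnit_iff_isUnit_det _).mp hu).ne_zero

end StmtAux8

/-- Generic rank of a polynomial applied entrywise to a matrix product:
the rank of `∑_{k=0}^{K} c_k (A Bᵀ)^(k)` equals
`min {m, n, ∑_{k=0}^{K} 1[c_k ≠ 0] C(k+d-1, k)}` for all `(A, B)` outside
the zero set of some non-identically-zero polynomial. -/
theorem stmt8 (m n d K : ℕ) (c : ℕ → ℝ) :
    ∃ p : MvPolynomial ((Fin m × Fin d) ⊕ (Fin n × Fin d)) ℝ, p ≠ 0 ∧
      ∀ (A : Matrix (Fin m) (Fin d) ℝ) (B : Matrix (Fin n) (Fin d) ℝ),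
        MvPolynomial.eval
            (Sum.elim (fun q => A q.1 q.2) (fun q => B q.1 q.2)) p ≠ 0 →
          (Matrix.of fun i j =>
              ∑ k ∈ Finset.range (K + 1), c k * ((A * B.transpose) i j) ^ k).rank =
            min m (min n (∑ k ∈ Finset.range (K + 1),
              if c k ≠ 0 then (k + d - 1).choose k else 0)) := by
  classical
  have hcard : (∑ k ∈ Finset.range (K + 1), if c k ≠ 0 then (k + d - 1).choose k else 0)
      = (auxS c d K).card := (card_auxS c d K).symm
  set R := (auxS c d K).card with hR
  set r := min m (min n R) with hr
  have hub : ∀ (A : Matrix (Fin m) (Fin d) ℝ) (B : Matrix (Fin n) (Fin d) ℝ),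
      (Matrix.of fun i j =>
        ∑ k ∈ Finset.range (K + 1), c k * ((A * Bᵀ) i j) ^ k).rank ≤ r := by
    intro A B
    refine le_min (Matrix.rank_le_height _) (le_min (Matrix.rank_le_width _) ?_)
    rw [factor m n A B]
    refine le_trans (Matrix.rank_mul_le_left _ _) ?_
    refine le_trans (Matrix.rank_le_card_width _) ?_
    rw [Fintype.card_coe]
  have hgoal : min m (min n (∑ k ∈ Finset.range (K + 1),
      if c k ≠ 0 then (k + d - 1).choose k else 0)) = r := by
    rw [hcard]
  by_cases hr0 : r = 0
  · refine ⟨1, one_ne_zero, fun A B _ => ?_⟩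
    rw [hgoal, hr0]
    exact Nat.le_zero.mp (hr0 ▸ hub A B)
  · have hrm : r ≤ m := min_le_left _ _
    have hrn : r ≤ n := le_trans (min_le_right _ _) (min_le_left _ _)
    have hrR : r ≤ R := le_trans (min_le_right _ _) (min_le_right _ _)
    have hr0' : 0 < r := Nat.pos_of_ne_zero hr0
    have hspan := span_auxu_top (auxS c d K)
    have hfr : R ≤ Module.finrank ℝ (Submodule.span ℝ
        (Set.range fun a : Fin d → ℝ => fun α : ↥(auxS c d K) => auxu a α.1)) := by
      rw [hspan, finrank_top, Module.finrank_pi, Fintype.card_coe]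
    obtain ⟨g₁, hg₁⟩ := exists_comp_linearIndependent _ hfr
    obtain ⟨g₂, hg₂⟩ := exists_comp_linearIndependent _ hfr
    set e : ↥(auxS c d K) ≃ Fin R := Fintype.equivFinOfCardEq (Fintype.card_coe _) with he
    set Xg : Matrix (Fin R) ↥(auxS c d K) ℝ :=
      Matrix.of fun i α => auxu (g₁ i) α.1 with hXg
    set Yg : Matrix ↥(auxS c d K) (Fin R) ℝ :=
      Matrix.of fun α j => auxdc c α.1 * auxu (g₂ j) α.1 with hYg
    set G := Xg * Yg with hG
    have hGunit : IsUnit G := by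
      have hsub : Xg.submatrix _root_.id e.symm * Yg.submatrix e.symm _root_.id = G := by
        rw [Matrix.submatrix_mul_equiv, Matrix.submatrix_id_id]
      have hXunit : IsUnit (Xg.submatrix _root_.id e.symm) := by
        rw [← Matrix.linearIndependent_rows_iff_isUnit]
        have hL : Function.Injective (LinearMap.funLeft ℝ ℝ e.symm) :=
          LinearMap.funLeft_injective_of_surjective ℝ ℝ _ e.symm.surjective
        have hmap := hg₁.map' (LinearMap.funLeft ℝ ℝ e.symm) (LinearMap.ker_eq_bot.mpr hL)
        have heq : (Xg.submatrix _root_.id e.symm : Fin R → Fin R → ℝ)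
            = (LinearMap.funLeft ℝ ℝ e.symm)
              ∘ ((fun a : Fin d → ℝ => fun α : ↥(auxS c d K) => auxu a α.1) ∘ g₁) := rfl
        rw [heq]
        exact hmap
      have hVunit : IsUnit ((Matrix.of fun (j : Fin R) (i : Fin R) =>
          auxu (g₂ j) ((e.symm i) : ↥(auxS c d K)).1)ᵀ) := by
        rw [Matrix.isUnit_transpose, ← Matrix.linearIndependent_rows_iff_isUnit]
        have hL : Function.Injective (LinearMap.funLeft ℝ ℝ e.symm) :=
          LinearMap.funLeft_injective_of_surjective ℝ ℝ _ e.symm.surjective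
        have hmap := hg₂.map' (LinearMap.funLeft ℝ ℝ e.symm) (LinearMap.ker_eq_bot.mpr hL)
        have heq : ((Matrix.of fun (j : Fin R) (i : Fin R) =>
            auxu (g₂ j) ((e.symm i) : ↥(auxS c d K)).1) : Fin R → Fin R → ℝ)
            = (LinearMap.funLeft ℝ ℝ e.symm)
              ∘ ((fun a : Fin d → ℝ => fun α : ↥(auxS c d K) => auxu a α.1) ∘ g₂) := rfl
        rw [heq]
        exact hmap
      have hdiag : IsUnit (Matrix.diagonal fun i : Fin R => auxdc c ((e.symm i) : ↥(auxS c d K)).1) := by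
        rw [Matrix.isUnit_iff_isUnit_det, Matrix.det_diagonal, isUnit_iff_ne_zero]
        rw [Finset.prod_ne_zero_iff]
        intro i _
        have h := mem_auxS (e.symm i).2
        exact mul_ne_zero h.2 (Nat.cast_ne_zero.mpr (Nat.multinomial_pos _ _).ne')
      have hYeq : Yg.submatrix e.symm _root_.id
          = (Matrix.diagonal fun i : Fin R => auxdc c ((e.symm i) : ↥(auxS c d K)).1)
            * (Matrix.of fun (j : Fin R) (i : Fin R) =>
                auxu (g₂ j) ((e.symm i) : ↥(auxS c d K)).1)ᵀ := by
        ext i j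
        rw [Matrix.diagonal_mul]
        rfl
      have hYunit : IsUnit (Yg.submatrix e.symm _root_.id) := by
        rw [hYeq]; exact hdiag.mul hVunit
      rw [← hsub]
      exact hXunit.mul hYunit
    have hGrank : G.rank = R := by
      rw [Matrix.rank_of_isUnit G hGunit, Fintype.card_fin]
    obtain ⟨f', g', hdet⟩ := exists_submatrix_det_ne_zero G (hGrank ▸ hrR)
    set σ : Fin m → Fin R :=
      fun i => if h : (i : ℕ) < r then f' ⟨i, h⟩ else f' ⟨0, hr0'⟩ with hσ
    set τ : Fin n → Fin R :=
      fun j => if h : (j : ℕ) < r then g' ⟨j, h⟩ else g' ⟨0, hr0'⟩ with hτ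
    set A₀ : Matrix (Fin m) (Fin d) ℝ := Matrix.of fun i l => g₁ (σ i) l with hA₀
    set B₀ : Matrix (Fin n) (Fin d) ℝ := Matrix.of fun j l => g₂ (τ j) l with hB₀
    have hM0 : (Matrix.of fun i j =>
        ∑ k ∈ Finset.range (K + 1), c k * ((A₀ * B₀ᵀ) i j) ^ k) = G.submatrix σ τ := by
      rw [factor m n A₀ B₀]
      ext i j
      simp only [Matrix.submatrix_apply, hG, Matrix.mul_apply, Matrix.of_apply]
      rfl
    set Pm : Matrix (Fin m) (Fin n) (MvPolynomial ((Fin m × Fin d) ⊕ (Fin n × Fin d)) ℝ) :=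
      Matrix.of fun i j => ∑ k ∈ Finset.range (K + 1),
        MvPolynomial.C (c k) *
          (∑ l : Fin d, MvPolynomial.X (Sum.inl (i, l)) * MvPolynomial.X (Sum.inr (j, l))) ^ k
      with hPm
    have heval : ∀ (A : Matrix (Fin m) (Fin d) ℝ) (B : Matrix (Fin n) (Fin d) ℝ)
        (i : Fin m) (j : Fin n),
        MvPolynomial.eval (Sum.elim (fun q => A q.1 q.2) (fun q => B q.1 q.2)) (Pm i j)
          = ∑ k ∈ Finset.range (K + 1), c k * ((A * Bᵀ) i j) ^ k := by
      intro A B i j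
      have hab : (A * Bᵀ) i j = ∑ l, A i l * B j l := by simp [Matrix.mul_apply]
      rw [hab, hPm]
      simp [map_sum, _root_.map_mul, map_pow, MvPolynomial.eval_C, MvPolynomial.eval_X]
    set ι₁ : Fin r → Fin m := Fin.castLE hrm with hι₁
    set ι₂ : Fin r → Fin n := Fin.castLE hrn with hι₂
    set p := (Pm.submatrix ι₁ ι₂).det with hp
    have hevalsub : ∀ (A : Matrix (Fin m) (Fin d) ℝ) (B : Matrix (Fin n) (Fin d) ℝ),
        MvPolynomial.eval (Sum.elim (fun q => A q.1 q.2) (fun q => B q.1 q.2)) p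
          = (((Matrix.of fun i j =>
              ∑ k ∈ Finset.range (K + 1), c k * ((A * Bᵀ) i j) ^ k).submatrix ι₁ ι₂)).det := by
      intro A B
      rw [hp, RingHom.map_det]
      congr 1
      ext i j
      simp only [Matrix.map_apply, Matrix.submatrix_apply]
      exact heval A B _ _
    have hσι : σ ∘ ι₁ = f' := by
      funext j
      have hj : ((ι₁ j : Fin m) : ℕ) < r := j.2
      simp only [Function.comp_apply, hσ]
      rw [dif_pos hj]
      exact congrArg f' (Fin.ext rfl)
    have hτι : τ ∘ ι₂ = g' := by
      funext j
      have hj : ((ι₂ j : Fin n) : ℕ) < r := j.2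
      simp only [Function.comp_apply, hτ]
      rw [dif_pos hj]
      exact congrArg g' (Fin.ext rfl)
    refine ⟨p, ?_, ?_⟩
    · intro hp0
      have h1 := hevalsub A₀ B₀
      rw [hp0, map_zero] at h1
      rw [hM0, Matrix.submatrix_submatrix, hσι, hτι] at h1
      exact hdet h1.symm
    · intro A B hev
      rw [hgoal]
      refine le_antisymm (hub A B) ?_
      have hdet' : (((Matrix.of fun i j =>
          ∑ k ∈ Finset.range (K + 1), c k * ((A * Bᵀ) i j) ^ k).submatrix ι₁ ι₂)).det ≠ 0 := by
        rw [← hevalsub A B]; exact hev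
      have hU : IsUnit ((Matrix.of fun i j =>
          ∑ k ∈ Finset.range (K + 1), c k * ((A * Bᵀ) i j) ^ k).submatrix ι₁ ι₂) :=
        (Matrix.isUnit_iff_isUnit_det _).mpr (isUnit_iff_ne_zero.mpr hdet')
      have hrk := Matrix.rank_of_isUnit _ hU
      calc r = ((Matrix.of fun i j =>
              ∑ k ∈ Finset.range (K + 1), c k * ((A * Bᵀ) i j) ^ k).submatrix ι₁ ι₂).rank := by
            rw [hrk, Fintype.card_fin]
        _ ≤ _ := rank_submatrix_le''_s8 _ _ _
end

section
/- Let $\phi:\mathbb{R}\to\mathbb{R}$ be real analytic and not a polynomial. Then for $A\in\mathbb{R}^{m\times d}$, $B\in\mathbb{R}^{n\times d}$, the rank of the Khatri-Rao product $B^T\odot\phi(AB^T)$ equals $\min\{md,n\}$ for all $(A,B)$ outside the zero set of a non-identically-zero real analytic function. -/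
open Set

private lemma itd_zero_fun (n : ℕ) : iteratedDeriv n (fun _ : ℝ => (0:ℝ)) = fun _ => (0:ℝ) := by
  induction n with
  | zero => ext x; simp [iteratedDeriv_zero]
  | succ n ih =>
    ext x
    rw [iteratedDeriv_succ', show deriv (fun _ : ℝ => (0:ℝ)) = fun _ => (0:ℝ) from funext fun y => deriv_const y 0, ih]

private lemma itd_add {f g : ℝ → ℝ} {n : ℕ} (hf : ContDiff ℝ n f) (hg : ContDiff ℝ n g) (x : ℝ) :
    iteratedDeriv n (fun y => f y + g y) x = iteratedDeriv n f x + iteratedDeriv n g x := by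
  rw [← iteratedDerivWithin_univ, ← iteratedDerivWithin_univ, ← iteratedDerivWithin_univ]
  exact iteratedDerivWithin_add (mem_univ x) uniqueDiffOn_univ
    (hf.contDiffOn (s := univ) x (mem_univ x)) (hg.contDiffOn (s := univ) x (mem_univ x))

private lemma itd_cmul {f : ℝ → ℝ} {n : ℕ} (c : ℝ) (hf : ContDiff ℝ n f) (x : ℝ) :
    iteratedDeriv n (fun y => c * f y) x = c * iteratedDeriv n f x := by
  rw [← iteratedDerivWithin_univ, ← iteratedDerivWithin_univ]
  exact iteratedDerivWithin_const_mul (mem_univ x) uniqueDiffOn_univ c (hf.contDiffOn (s := univ) x (mem_univ x))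

private lemma itd_sum {ι : Type*} (s : Finset ι) (g : ι → ℝ → ℝ) {n : ℕ}
    (hg : ∀ i, ContDiff ℝ n (g i)) (x : ℝ) :
    iteratedDeriv n (fun y => ∑ i ∈ s, g i y) x = ∑ i ∈ s, iteratedDeriv n (g i) x := by
  classical
  induction s using Finset.induction with
  | empty => simpa using congrFun (itd_zero_fun n) x
  | insert a t ha ih =>
    have h1 : ContDiff ℝ n (fun y => ∑ i ∈ t, g i y) := by
      apply ContDiff.sum (fun i _ => hg i)
    simp only [Finset.sum_insert ha]
    rw [itd_add (hg a) h1, ih]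

private lemma itd_xmul {g : ℝ → ℝ} (hg : ∀ n : ℕ, ContDiff ℝ n g) :
    ∀ (q : ℕ), iteratedDeriv (q + 1) (fun y : ℝ => y * g y) 0 = (q + 1 : ℝ) * iteratedDeriv q g 0 := by
  intro q
  induction q generalizing g with
  | zero =>
    have hd : ∀ y : ℝ, HasDerivAt (fun z : ℝ => z * g z) (1 * g y + y * deriv g y) y := by
      intro y
      exact (hasDerivAt_id y).mul (((hg 1).differentiable (by simp) y).hasDerivAt)
    rw [iteratedDeriv_one, (hd 0).deriv, iteratedDeriv_zero]
    ring
  | succ q ih =>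
    have hdg : ∀ n : ℕ, ContDiff ℝ n (deriv g) := by
      intro n
      have := (hg (n+1)).iterate_deriv' n 1
      simpa using this
    have hder : deriv (fun y : ℝ => y * g y) = fun y : ℝ => g y + y * deriv g y := by
      funext y
      have hd : HasDerivAt (fun z : ℝ => z * g z) (1 * g y + y * deriv g y) y :=
        (hasDerivAt_id y).mul (((hg 1).differentiable (by simp) y).hasDerivAt)
      rw [hd.deriv]; ring
    rw [iteratedDeriv_succ', hder]
    have h2 : ContDiff ℝ (q+1 : ℕ) (fun y : ℝ => y * deriv g y) := by
      exact (contDiff_id).mul (hdg (q+1))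
    rw [itd_add (n := q + 1) (hg (q+1)) h2 0, ih hdg, ← iteratedDeriv_succ']
    push_cast
    ring

private lemma itd_comp_mul {g : ℝ → ℝ} (hg : ∀ n : ℕ, ContDiff ℝ n g) (c : ℝ) (q : ℕ) :
    iteratedDeriv q (fun y : ℝ => g (c * y)) 0 = c ^ q * iteratedDeriv q g 0 := by
  rw [iteratedDeriv_comp_const_mul (hg q) c]
  norm_num
open Set

private lemma poly_analytic (P : Polynomial ℝ) : AnalyticOnNhd ℝ (fun x => P.eval x) Set.univ := by
  intro x _
  induction P using Polynomial.induction_on' with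
  | add p q hp hq => simp only [Polynomial.eval_add]; exact hp.add hq
  | monomial n a =>
    simp only [Polynomial.eval_monomial]
    exact analyticAt_const.mul (analyticAt_id.pow n)

private lemma many_nonzero (φ : ℝ → ℝ) (hφ : AnalyticOnNhd ℝ φ Set.univ)
    (hnp : ¬ ∃ P : Polynomial ℝ, ∀ x, φ x = P.eval x) :
    ∀ N : ℕ, ∃ q, N ≤ q ∧ iteratedDeriv q φ 0 ≠ 0 := by
  intro N
  by_contra hcon
  push_neg at hcon
  apply hnp
  obtain ⟨pf, r, hr⟩ := hφ 0 (mem_univ 0)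
  set P : Polynomial ℝ := ∑ q ∈ Finset.range N,
    Polynomial.C ((q.factorial : ℝ)⁻¹ * iteratedDeriv q φ 0) * Polynomial.X ^ q with hP
  have hloc : ∀ y ∈ EMetric.ball (0:ℝ) r, φ y = P.eval y := by
    intro y hy
    have hs := hr.hasSum_iteratedFDeriv hy
    have hterm : ∀ q : ℕ, (q.factorial : ℝ)⁻¹ • iteratedFDeriv ℝ q φ 0 (fun _ => y)
        = (q.factorial : ℝ)⁻¹ * iteratedDeriv q φ 0 * y ^ q := by
      intro q
      have h1 : iteratedFDeriv ℝ q φ 0 (fun _ => y)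
          = (∏ _i : Fin q, y) • iteratedFDeriv ℝ q φ 0 (fun _ => (1:ℝ)) := by
        rw [← (iteratedFDeriv ℝ q φ 0).map_smul_univ (fun _ => y) (fun _ => (1:ℝ))]
        simp
      rw [h1, ← iteratedDeriv_eq_iteratedFDeriv]
      simp [smul_eq_mul]
      ring
    have hs2 : HasSum (fun q : ℕ => (q.factorial : ℝ)⁻¹ * iteratedDeriv q φ 0 * y ^ q) (φ y) := by
      simp only [hterm, zero_add] at hs
      exact hs
    have hzero : ∀ q ∉ Finset.range N,
        (q.factorial : ℝ)⁻¹ * iteratedDeriv q φ 0 * y ^ q = 0 := by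
      intro q hq
      rw [Finset.mem_range, not_lt] at hq
      rw [hcon q hq]
      ring
    have := hs2.tsum_eq
    rw [tsum_eq_sum hzero] at this
    rw [← this, hP]
    simp only [Polynomial.eval_finset_sum, Polynomial.eval_mul, Polynomial.eval_C,
      Polynomial.eval_pow, Polynomial.eval_X]
  have hev : φ =ᶠ[nhds (0:ℝ)] (fun x => P.eval x) := by
    filter_upwards [EMetric.ball_mem_nhds (0:ℝ) hr.r_pos] with y hy using hloc y hy
  have := AnalyticOnNhd.eq_of_eventuallyEq hφ (poly_analytic P) hev
  exact ⟨P, fun x => congrFun this x⟩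
open Set

private lemma vdm_exists {m : ℕ} (p : Fin m → ℕ) (hp : Function.Injective p) :
    ∃ s : Fin m → ℝ, (Matrix.of fun i l : Fin m => s i ^ p l).det ≠ 0 := by
  classical
  by_contra hcon
  push_neg at hcon
  -- polynomial determinant
  set Q : MvPolynomial (Fin m) ℝ :=
    (Matrix.of fun i l : Fin m => (MvPolynomial.X i : MvPolynomial (Fin m) ℝ) ^ p l).det with hQ
  have hQ0 : Q = 0 := by
    have : ∀ s : Fin m → ℝ, MvPolynomial.eval s Q = MvPolynomial.eval s 0 := by
      intro s
      rw [hQ, RingHom.map_det]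
      have hmap : (Matrix.of fun i l : Fin m => (MvPolynomial.X i : MvPolynomial (Fin m) ℝ) ^ p l).map
          (MvPolynomial.eval s) = Matrix.of fun i l : Fin m => s i ^ p l := by
        ext i l
        simp [Matrix.map_apply]
      rw [show (MvPolynomial.eval s).mapMatrix
          (Matrix.of fun i l : Fin m => (MvPolynomial.X i : MvPolynomial (Fin m) ℝ) ^ p l)
          = (Matrix.of fun i l : Fin m => (MvPolynomial.X i : MvPolynomial (Fin m) ℝ) ^ p l).map
            (MvPolynomial.eval s) from rfl, hmap]
      simp [hcon s]
    exact MvPolynomial.funext this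
  -- but the coefficient of ∏ X i ^ p i in Q is 1
  set μ : Fin m →₀ ℕ := Finsupp.equivFunOnFinite.symm p with hμ
  have hcoeff : MvPolynomial.coeff μ Q = 1 := by
    rw [hQ, Matrix.det_apply]
    rw [MvPolynomial.coeff_sum]
    have hterm : ∀ σ : Equiv.Perm (Fin m),
        MvPolynomial.coeff μ (Equiv.Perm.sign σ •
          ∏ i, (Matrix.of fun i l : Fin m => (MvPolynomial.X i : MvPolynomial (Fin m) ℝ) ^ p l) (σ i) i)
        = if σ = 1 then 1 else 0 := by
      intro σ
      have hprod : (∏ i, (Matrix.of fun i l : Fin m => (MvPolynomial.X i : MvPolynomial (Fin m) ℝ) ^ p l) (σ i) i)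
          = ∏ i, (MvPolynomial.X i : MvPolynomial (Fin m) ℝ) ^ p (σ⁻¹ i) := by
        rw [← Equiv.prod_comp σ (fun j => (MvPolynomial.X j : MvPolynomial (Fin m) ℝ) ^ p (σ⁻¹ j))]
        apply Finset.prod_congr rfl
        intro i _
        simp [Matrix.of_apply]
      rw [hprod]
      set ν : Fin m →₀ ℕ := Finsupp.equivFunOnFinite.symm (fun i => p (σ⁻¹ i)) with hν
      have hmon : (∏ i, (MvPolynomial.X i : MvPolynomial (Fin m) ℝ) ^ p (σ⁻¹ i))
          = MvPolynomial.monomial ν (1:ℝ) := by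
        rw [← MvPolynomial.prod_X_pow_eq_monomial]
        rw [← Finset.prod_subset (Finset.subset_univ ν.support)]
        · apply Finset.prod_congr rfl
          intro i _
          congr 1
        · intro i _ hi
          have h0 : ν i = 0 := Finsupp.notMem_support_iff.mp hi
          have h0' : p (σ⁻¹ i) = 0 := h0
          have h0'' : p (σ.symm i) = 0 := h0'
          simp [h0', h0'']
      rw [hmon, MvPolynomial.coeff_smul, MvPolynomial.coeff_monomial]
      by_cases hσ : σ = 1
      · subst hσ
        have : ν = μ := by
          ext i
          simp [hν, hμ]
        simp [this]
      · have hne : ν ≠ μ := by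
          intro hcontra
          apply hσ
          have hfun : ∀ i, p (σ⁻¹ i) = p i := by
            intro i
            have := congrArg (fun g => g i) (congrArg (Finsupp.equivFunOnFinite) hcontra)
            simpa [hν, hμ] using this
          have hσinv : ∀ i, σ⁻¹ i = i := fun i => hp (hfun i)
          ext i
          conv_lhs => rw [← hσinv (σ i)]
          simp
        simp [hne, hσ]
    rw [Finset.sum_congr rfl (fun σ _ => hterm σ)]
    simp
  rw [hQ0] at hcoeff
  simp at hcoeff
open Set

private lemma span_points {k : ℕ} {Θ : Type*} (F : Θ → (Fin k → ℝ))
    (h : ∀ c : Fin k → ℝ, (∀ θ, ∑ t, c t * F θ t = 0) → c = 0) :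
    ∃ θ : Fin k → Θ, Matrix.det (Matrix.of fun t j => F (θ j) t) ≠ 0 := by
  classical
  -- span of range F is ⊤
  have hsp : Submodule.span ℝ (Set.range F) = ⊤ := by
    by_contra hne
    obtain ⟨g, hg0, hgbot⟩ :=
      Submodule.exists_dual_map_eq_bot_of_lt_top (lt_top_iff_ne_top.mpr hne) inferInstance
    set c : Fin k → ℝ := fun t => g (fun j => if t = j then (1:ℝ) else 0) with hc
    have hgc : ∀ w : Fin k → ℝ, g w = ∑ t, w t * c t := by
      intro w
      rw [LinearMap.pi_apply_eq_sum_univ g w]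
      simp [hc, smul_eq_mul]
    have hcz : c = 0 := by
      apply h
      intro θ
      have hmem : F θ ∈ Submodule.span ℝ (Set.range F) :=
        Submodule.subset_span (Set.mem_range_self θ)
      have : g (F θ) = 0 := by
        have : g (F θ) ∈ Submodule.map g (Submodule.span ℝ (Set.range F)) :=
          Submodule.mem_map_of_mem hmem
        rw [hgbot] at this
        simpa using this
      rw [hgc (F θ)] at this
      simpa [mul_comm] using this
    apply hg0
    apply LinearMap.ext
    intro w
    rw [hgc w, hcz]
    simp
  -- extract a linearly independent spanning family
  obtain ⟨b, hbsub, hbsp, hbli⟩ := exists_linearIndependent ℝ (Set.range F)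
  rw [hsp] at hbsp
  let Bas : Module.Basis b ℝ (Fin k → ℝ) := Module.Basis.mk hbli (by rw [Subtype.range_coe, hbsp])
  haveI : Fintype b := FiniteDimensional.fintypeBasisIndex Bas
  have hcard : Fintype.card b = k := by
    have h1 := Module.finrank_eq_card_basis Bas
    rw [Module.finrank_fin_fun ℝ] at h1
    omega
  let e : Fin k ≃ b := (Fintype.equivFinOfCardEq hcard).symm
  have hchoice : ∀ j : Fin k, ∃ θ : Θ, F θ = (e j : Fin k → ℝ) := by
    intro j
    exact hbsub (e j).2
  choose θ hθ using hchoice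
  refine ⟨θ, ?_⟩
  -- the matrix with rows F (θ j) is invertible
  have hli : LinearIndependent ℝ (fun j : Fin k => F (θ j)) := by
    have : (fun j : Fin k => F (θ j)) = (fun x : b => (x : Fin k → ℝ)) ∘ e := by
      funext j
      simp [hθ j]
    rw [this]
    exact hbli.comp e e.injective
  set N : Matrix (Fin k) (Fin k) ℝ := Matrix.of fun t j => F (θ j) t with hN
  have hrows : LinearIndependent ℝ (fun j => N.transpose j) := by
    have : (fun j => N.transpose j) = fun j : Fin k => F (θ j) := by
      funext j
      rfl
    rw [this]
    exact hli
  have hunit : IsUnit N.transpose := Matrix.linearIndependent_rows_iff_isUnit.mp hrows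
  have hdet : N.transpose.det ≠ 0 := by
    have := (Matrix.isUnit_iff_isUnit_det _).mp hunit
    exact this.ne_zero
  rw [Matrix.det_transpose] at hdet
  exact hdet
private lemma L2 (φ : ℝ → ℝ) (m : ℕ) (hφ : AnalyticOnNhd ℝ φ Set.univ)
    (hder : ∀ N : ℕ, ∃ q, N ≤ q ∧ iteratedDeriv q φ 0 ≠ 0) :
    ∃ s : Fin m → ℝ,
      (∀ c : Fin m → ℝ, (∀ x, ∑ i, c i * φ (s i * x) = 0) → c = 0) ∧
      (∀ c : Fin m → ℝ, (∀ x, x * ∑ i, c i * φ (s i * x) = 0) → c = 0) := by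
  classical
  have hCn : ∀ n : ℕ, ContDiff ℝ n φ := fun n => hφ.contDiff
  -- build strictly monotone sequence of nonzero-derivative orders
  choose F hF1 hF2 using hder
  set p : ℕ → ℕ := fun l => Nat.rec (F 0) (fun _ prev => F (prev + 1)) l with hp
  have hpmono : StrictMono p := by
    apply strictMono_nat_of_lt_succ
    intro l
    calc p l < p l + 1 := Nat.lt_succ_self _
    _ ≤ F (p l + 1) := hF1 _
    _ = p (l + 1) := rfl
  have hpa : ∀ l, iteratedDeriv (p l) φ 0 ≠ 0 := by
    intro l
    cases l with
    | zero => exact hF2 0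
    | succ l => exact hF2 _
  obtain ⟨s, hs⟩ := vdm_exists (fun l : Fin m => p l) (fun a b hab => Fin.ext (hpmono.injective hab))
  refine ⟨s, ?_, ?_⟩
  -- common derivative computation
  all_goals {
    intro c hc
    have hg : ∀ i : Fin m, ∀ n : ℕ, ContDiff ℝ n (fun y : ℝ => c i * φ (s i * y)) := by
      intro i n
      exact ContDiff.mul contDiff_const ((hCn n).comp ((contDiff_const).mul contDiff_id))
    have hG : ∀ n : ℕ, ContDiff ℝ n (fun y : ℝ => ∑ i, c i * φ (s i * y)) :=
      fun n => ContDiff.sum (fun i _ => hg i n)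
    have key : ∀ q : ℕ, iteratedDeriv q (fun y : ℝ => ∑ i, c i * φ (s i * y)) 0
        = (∑ i, c i * s i ^ q) * iteratedDeriv q φ 0 := by
      intro q
      rw [itd_sum Finset.univ _ (fun i => hg i q) 0]
      rw [Finset.sum_mul]
      apply Finset.sum_congr rfl
      intro i _
      rw [itd_cmul (f := fun y : ℝ => φ (s i * y)) (c i)
        (by exact (hCn q).comp ((contDiff_const).mul contDiff_id)) 0]
      rw [itd_comp_mul hCn (s i) q]
      ring
    have hvan : ∀ l : Fin m, (∑ i, c i * s i ^ (p l)) = 0 := by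
      intro l
      first
      | -- case (a): the function itself vanishes
        (have h0 : (fun y : ℝ => ∑ i, c i * φ (s i * y)) = fun _ => 0 := funext hc
         have := key (p l)
         rw [h0, itd_zero_fun (p l)] at this
         have := this.symm
         rcases mul_eq_zero.mp this with h | h
         · exact h
         · exact absurd h (hpa l))
      | -- case (b): x * function vanishes
        (have h0 : (fun y : ℝ => y * ∑ i, c i * φ (s i * y)) = fun _ => 0 := funext hc
         have hx := itd_xmul hG (p l)
         rw [h0, itd_zero_fun (p l + 1)] at hx
         have hx2 : (p l + 1 : ℝ) * ((∑ i, c i * s i ^ (p l)) * iteratedDeriv (p l) φ 0) = 0 := by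
           rw [← key (p l)]
           exact hx.symm
         rcases mul_eq_zero.mp hx2 with h | h
         · exact absurd h (by positivity)
         · rcases mul_eq_zero.mp h with h | h
           · exact h
           · exact absurd h (hpa l))
    -- Vandermonde conclusion
    have hunit : IsUnit (Matrix.of fun i l : Fin m => s i ^ p l) :=
      (Matrix.isUnit_iff_isUnit_det _).mpr (isUnit_iff_ne_zero.mpr hs)
    have hinj := Matrix.vecMul_injective_iff_isUnit.mpr hunit
    have hvec : Matrix.vecMul c (Matrix.of fun i l : Fin m => s i ^ p l) = Matrix.vecMul 0 (Matrix.of fun i l : Fin m => s i ^ p l) := by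
      rw [Matrix.zero_vecMul]
      funext l
      rw [show Matrix.vecMul c (Matrix.of fun i l : Fin m => s i ^ p l) l = ∑ i, c i * s i ^ p l from rfl]
      exact hvan l
    exact hinj hvec
  }
/-- If `φ : ℝ → ℝ` is real analytic and not a polynomial, then the Khatri-Rao
product `Bᵀ ⊙ φ(A Bᵀ) ∈ ℝ^{md × n}` has rank `min {m d, n}` for all `(A, B)`
outside the zero set of a non-identically-zero real analytic function. -/
theorem stmt12 (m n d : ℕ) (φ : ℝ → ℝ)
    (hφ : AnalyticOnNhd ℝ φ Set.univ)
    (hnp : ¬ ∃ P : Polynomial ℝ, ∀ x, φ x = P.eval x) :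
    ∃ f : (((Fin m × Fin d) ⊕ (Fin n × Fin d)) → ℝ) → ℝ,
      AnalyticOnNhd ℝ f Set.univ ∧ (∃ x, f x ≠ 0) ∧
      ∀ (A : Matrix (Fin m) (Fin d) ℝ) (B : Matrix (Fin n) (Fin d) ℝ),
        f (Sum.elim (fun q => A q.1 q.2) (fun q => B q.1 q.2)) ≠ 0 →
          (Matrix.of fun (r : Fin d × Fin m) (j : Fin n) =>
              B j r.1 * φ ((A * B.transpose) r.2 j)).rank = min (m * d) n := by
  classical
  set k := min (m * d) n with hk
  -- generic rank upper bound
  have hub : ∀ (M : Matrix (Fin d × Fin m) (Fin n) ℝ), M.rank ≤ k := by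
    intro M
    have h1 : M.rank ≤ m * d := by
      have := M.rank_le_card_height
      simpa [Fintype.card_prod, Nat.mul_comm] using this
    have h2 : M.rank ≤ n := by
      have := M.rank_le_card_width
      simpa using this
    exact le_min h1 h2
  by_cases hk0 : k = 0
  · -- trivial case
    refine ⟨fun _ => 1, ?_, ⟨0, one_ne_zero⟩, ?_⟩
    · intro x _; exact analyticAt_const
    · intro A B _
      have := hub (Matrix.of fun (r : Fin d × Fin m) (j : Fin n) =>
        B j r.1 * φ ((A * B.transpose) r.2 j))
      omega
  -- main case
  have hkpos : 0 < k := Nat.pos_of_ne_zero hk0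
  have hkmd : k ≤ m * d := min_le_left _ _
  have hkn : k ≤ n := min_le_right _ _
  have hmd0 : 0 < m * d := lt_of_lt_of_le hkpos hkmd
  have hm0 : 0 < m := Nat.pos_of_ne_zero (fun h => by simp [h] at hmd0)
  have hd0 : 0 < d := Nat.pos_of_ne_zero (fun h => by simp [h] at hmd0)
  haveI : NeZero d := ⟨Nat.pos_iff_ne_zero.mp hd0⟩
  -- entries as functions of the combined variable
  set ent : (((Fin m × Fin d) ⊕ (Fin n × Fin d)) → ℝ) → (Fin d × Fin m) → Fin n → ℝ :=
    fun y p j => y (Sum.inr (j, p.1)) *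
      φ (∑ r : Fin d, y (Sum.inl (p.2, r)) * y (Sum.inr (j, r))) with hent_def
  set f : (((Fin m × Fin d) ⊕ (Fin n × Fin d)) → ℝ) → ℝ :=
    fun y => ∑ ργ : (Fin k → Fin d × Fin m) × (Fin k → Fin n),
      (Matrix.det (Matrix.of fun t t' => ent y (ργ.1 t) (ργ.2 t'))) ^ 2 with hf_def
  -- analyticity of the entries
  have hent_an : ∀ (p : Fin d × Fin m) (j : Fin n) (x : ((Fin m × Fin d) ⊕ (Fin n × Fin d)) → ℝ),
      AnalyticAt ℝ (fun y => ent y p j) x := by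
    intro p j x
    apply AnalyticAt.mul
    · exact (ContinuousLinearMap.proj (R := ℝ)
        (φ := fun _ : ((Fin m × Fin d) ⊕ (Fin n × Fin d)) => ℝ)
        (Sum.inr (j, p.1))).analyticAt x
    · apply AnalyticAt.comp (hφ _ (Set.mem_univ _))
      apply Finset.analyticAt_fun_sum
      intro r _
      exact ((ContinuousLinearMap.proj (R := ℝ)
          (φ := fun _ : ((Fin m × Fin d) ⊕ (Fin n × Fin d)) => ℝ)
          (Sum.inl (p.2, r))).analyticAt x).mul
        ((ContinuousLinearMap.proj (R := ℝ)
          (φ := fun _ : ((Fin m × Fin d) ⊕ (Fin n × Fin d)) => ℝ)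
          (Sum.inr (j, r))).analyticAt x)
  -- analyticity of f
  have hf_an : AnalyticOnNhd ℝ f Set.univ := by
    intro x _
    apply Finset.analyticAt_fun_sum
    intro ργ _
    apply AnalyticAt.pow
    have hdet_eq : (fun y => Matrix.det (Matrix.of fun t t' => ent y (ργ.1 t) (ργ.2 t')))
        = fun y => ∑ σ : Equiv.Perm (Fin k),
            ((Equiv.Perm.sign σ : ℤ) : ℝ) * ∏ t, ent y (ργ.1 (σ t)) (ργ.2 t) := by
      funext y
      rw [Matrix.det_apply]
      apply Finset.sum_congr rfl
      intro σ _
      rw [Units.smul_def, zsmul_eq_mul]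
      norm_num
    rw [hdet_eq]
    apply Finset.analyticAt_fun_sum
    intro σ _
    exact analyticAt_const.mul (Finset.analyticAt_fun_prod _ (fun t _ => hent_an _ _ x))
  -- a nonzero k×k minor forces rank ≥ k
  have hsub : ∀ (M : Matrix (Fin d × Fin m) (Fin n) ℝ)
      (ρ : Fin k → Fin d × Fin m) (γ : Fin k → Fin n),
      (Matrix.of fun t t' => M (ρ t) (γ t')).det ≠ 0 → k ≤ M.rank := by
    intro M ρ γ hdet
    set P : Matrix (Fin k) (Fin d × Fin m) ℝ :=
      Matrix.of fun t x => if x = ρ t then (1:ℝ) else 0 with hP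
    set Q : Matrix (Fin n) (Fin k) ℝ :=
      Matrix.of fun j t' => if j = γ t' then (1:ℝ) else 0 with hQ
    have hPMQ : (Matrix.of fun t t' => M (ρ t) (γ t')) = P * M * Q := by
      ext t t'
      rw [Matrix.mul_assoc, Matrix.mul_apply]
      have hterm : ∀ x, P t x * (M * Q) x t'
          = if x = ρ t then (M * Q) x t' else 0 := by
        intro x
        rw [hP]
        simp only [Matrix.of_apply, ite_mul, one_mul, zero_mul]
      rw [Finset.sum_congr rfl (fun x _ => hterm x), Finset.sum_ite_eq' Finset.univ (ρ t)]
      simp only [Finset.mem_univ, if_true]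
      rw [Matrix.mul_apply]
      have hterm2 : ∀ jj, M (ρ t) jj * Q jj t'
          = if jj = γ t' then M (ρ t) jj else 0 := by
        intro jj
        rw [hQ]
        simp only [Matrix.of_apply, mul_ite, mul_one, mul_zero]
      rw [Finset.sum_congr rfl (fun jj _ => hterm2 jj), Finset.sum_ite_eq' Finset.univ (γ t')]
      simp
    have hr1 : (Matrix.of fun t t' => M (ρ t) (γ t')).rank = k := by
      rw [Matrix.rank_of_isUnit _ ((Matrix.isUnit_iff_isUnit_det _).mpr
        (isUnit_iff_ne_zero.mpr hdet))]
      simp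
    calc k = (Matrix.of fun t t' => M (ρ t) (γ t')).rank := hr1.symm
    _ = (P * M * Q).rank := by rw [hPMQ]
    _ ≤ (P * M).rank := Matrix.rank_mul_le_left _ _
    _ ≤ M.rank := Matrix.rank_mul_le_right _ _
  -- the construction of a good point
  obtain ⟨s, hsa, hsb⟩ := L2 φ m hφ (many_nonzero φ hφ hnp)
  have hρ2 : ∀ t : Fin k, (t : ℕ) / m < d := by
    intro t
    rw [Nat.div_lt_iff_lt_mul hm0]
    calc (t : ℕ) < k := t.2
    _ ≤ m * d := hkmd
    _ = d * m := Nat.mul_comm m d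
  set ρ : Fin k → Fin d × Fin m :=
    fun t => (⟨(t : ℕ) / m, hρ2 t⟩, ⟨(t : ℕ) % m, Nat.mod_lt _ hm0⟩) with hρ_def
  have hρinj : Function.Injective ρ := by
    intro a b hab
    have hdiv : (a : ℕ) / m = (b : ℕ) / m := congrArg (fun z : Fin d × Fin m => (z.1 : ℕ)) hab
    have hmod : (a : ℕ) % m = (b : ℕ) % m := congrArg (fun z : Fin d × Fin m => (z.2 : ℕ)) hab
    apply Fin.ext
    conv_lhs => rw [← Nat.div_add_mod (a : ℕ) m]
    conv_rhs => rw [← Nat.div_add_mod (b : ℕ) m]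
    rw [hdiv, hmod]
  set F : (Fin d → ℝ) → Fin k → ℝ :=
    fun v t => v (ρ t).1 * φ (s (ρ t).2 * v 0) with hF_def
  have hF : ∀ c : Fin k → ℝ, (∀ v, ∑ t, c t * F v t = 0) → c = 0 := by
    intro c hc
    set α : Fin d → ℝ → ℝ :=
      fun r x => ∑ t ∈ Finset.univ.filter (fun t => (ρ t).1 = r),
        c t * φ (s (ρ t).2 * x) with hα_def
    have key : ∀ (x : ℝ) (w : Fin d → ℝ), w 0 = 0 →
        x * α 0 x + ∑ t, c t * (w (ρ t).1 * φ (s (ρ t).2 * x)) = 0 := by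
      intro x w hw0
      set u : Fin d → ℝ := Pi.single (0 : Fin d) x + w with hu_def
      have h1 := hc u
      have h2 : ∀ t : Fin k, c t * F u t
          = (if (ρ t).1 = 0 then x * (c t * φ (s (ρ t).2 * x)) else 0)
            + c t * (w (ρ t).1 * φ (s (ρ t).2 * x)) := by
        intro t
        have hv0 : u 0 = x := by
          simp [hu_def, hw0]
        have hvr : u (ρ t).1
            = (if (ρ t).1 = 0 then x else 0) + w (ρ t).1 := by
          simp [hu_def, Pi.single_apply]
        rw [hF_def]
        simp only [hv0, hvr]
        split_ifs <;> ring
      rw [Finset.sum_congr rfl (fun t _ => h2 t), Finset.sum_add_distrib] at h1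
      rw [← Finset.sum_filter] at h1
      simp only [hα_def]
      rw [Finset.mul_sum]
      exact h1
    have hA : ∀ x : ℝ, x * α 0 x = 0 := by
      intro x
      have := key x 0 rfl
      simpa using this
    have hB : ∀ r : Fin d, r ≠ 0 → ∀ x : ℝ, α r x = 0 := by
      intro r hr x
      have h1 := key x (Pi.single r 1) (by simp [Pi.single_apply, Ne.symm hr])
      rw [hA x, zero_add] at h1
      have h2 : ∀ t : Fin k, c t * ((Pi.single r (1:ℝ) : Fin d → ℝ) (ρ t).1 * φ (s (ρ t).2 * x))
          = if (ρ t).1 = r then c t * φ (s (ρ t).2 * x) else 0 := by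
        intro t
        simp only [Pi.single_apply]
        split_ifs <;> ring
      rw [Finset.sum_congr rfl (fun t _ => h2 t), ← Finset.sum_filter] at h1
      rw [hα_def]
      exact h1
    -- conclude coefficientwise
    funext t0
    set r0 := (ρ t0).1 with hr0
    set i0 := (ρ t0).2 with hi0
    set cc : Fin m → ℝ :=
      fun i => ∑ t ∈ Finset.univ.filter (fun t => ρ t = (r0, i)), c t with hcc_def
    have hregroup : ∀ x : ℝ, ∑ i, cc i * φ (s i * x) = α r0 x := by
      intro x
      simp only [hα_def]
      rw [← Finset.sum_fiberwise_of_maps_to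
        (g := fun t => (ρ t).2) (t := Finset.univ)
        (fun t _ => Finset.mem_univ _) (fun t => c t * φ (s (ρ t).2 * x))]
      apply Finset.sum_congr rfl
      intro i _
      rw [hcc_def, Finset.sum_mul, Finset.filter_filter]
      apply Finset.sum_congr
      · apply Finset.filter_congr
        intro t _
        constructor
        · intro ht
          exact ⟨by rw [ht], by rw [ht]⟩
        · intro ⟨ha, hb⟩
          exact Prod.ext ha hb
      · intro t ht
        simp only [Finset.mem_filter] at ht
        rw [← ht.2.2]
    have hcc0 : cc = 0 := by
      by_cases hr00 : r0 = 0
      · apply hsb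
        intro x
        rw [hregroup x, hr00]
        exact hA x
      · apply hsa
        intro x
        rw [hregroup x]
        exact hB r0 hr00 x
    have hsingle : Finset.univ.filter (fun t => ρ t = (r0, i0)) = {t0} := by
      ext t
      simp only [Finset.mem_filter, Finset.mem_univ, true_and, Finset.mem_singleton]
      constructor
      · intro ht
        apply hρinj
        rw [ht, hr0, hi0]
      · intro ht
        rw [ht, hr0, hi0]
    have : cc i0 = c t0 := by
      rw [hcc_def]
      simp only
      rw [hsingle, Finset.sum_singleton]
    rw [hcc0] at this
    simp only [Pi.zero_apply] at this
    exact (this.symm.trans rfl : c t0 = 0)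
  obtain ⟨v, hv⟩ := span_points F hF
  -- assemble the witness point
  set y0 : ((Fin m × Fin d) ⊕ (Fin n × Fin d)) → ℝ :=
    Sum.elim (fun q => if q.2 = 0 then s q.1 else 0)
      (fun q => if h : (q.1 : ℕ) < k then v ⟨(q.1 : ℕ), h⟩ q.2 else 0) with hy0_def
  set γ : Fin k → Fin n := fun t => ⟨(t : ℕ), lt_of_lt_of_le t.2 hkn⟩ with hγ_def
  have hentval : ∀ t t' : Fin k, ent y0 (ρ t) (γ t') = F (v t') t := by
    intro t t'
    have hyr : ∀ r : Fin d, y0 (Sum.inr (γ t', r)) = v t' r := by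
      intro r
      rw [hy0_def]
      simp only [Sum.elim_inr]
      rw [dif_pos (show ((γ t' : Fin n) : ℕ) < k from t'.2)]
    have hyl : ∀ r : Fin d, y0 (Sum.inl ((ρ t).2, r)) = if r = 0 then s (ρ t).2 else 0 := by
      intro r
      rw [hy0_def]
      simp
    have hsum : (∑ r : Fin d, y0 (Sum.inl ((ρ t).2, r)) * y0 (Sum.inr (γ t', r)))
        = s (ρ t).2 * v t' 0 := by
      have hterm : ∀ r : Fin d, y0 (Sum.inl ((ρ t).2, r)) * y0 (Sum.inr (γ t', r))
          = if r = 0 then s (ρ t).2 * v t' r else 0 := by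
        intro r
        rw [hyl r, hyr r]
        split_ifs <;> ring
      rw [Finset.sum_congr rfl (fun r _ => hterm r), Finset.sum_ite_eq' Finset.univ (0 : Fin d)]
      simp
    show y0 (Sum.inr (γ t', (ρ t).1)) *
        φ (∑ r : Fin d, y0 (Sum.inl ((ρ t).2, r)) * y0 (Sum.inr (γ t', r))) = F (v t') t
    rw [hsum, hyr (ρ t).1, hF_def]
  have hfy0 : f y0 ≠ 0 := by
    have hterm_pos : (0:ℝ) < (Matrix.det (Matrix.of fun t t' => ent y0 (ρ t) (γ t'))) ^ 2 := by
      apply pow_two_pos_of_ne_zero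
      have : (Matrix.of fun t t' => ent y0 (ρ t) (γ t'))
          = (Matrix.of fun t j => F (v j) t) := by
        ext t t'
        exact hentval t t'
      rw [this]
      exact hv
    rw [hf_def]
    apply ne_of_gt
    apply Finset.sum_pos'
    · intro i _
      positivity
    · exact ⟨(ρ, γ), Finset.mem_univ _, hterm_pos⟩
  refine ⟨f, hf_an, ⟨y0, hfy0⟩, ?_⟩
  -- the main implication
  intro A B hfAB
  set y := Sum.elim (fun q : Fin m × Fin d => A q.1 q.2) (fun q : Fin n × Fin d => B q.1 q.2) with hy_def
  set M : Matrix (Fin d × Fin m) (Fin n) ℝ :=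
    Matrix.of fun (r : Fin d × Fin m) (j : Fin n) =>
      B j r.1 * φ ((A * B.transpose) r.2 j) with hM_def
  have hMent : ∀ (p : Fin d × Fin m) (j : Fin n), M p j = ent y p j := by
    intro p j
    show B j p.1 * φ ((A * B.transpose) p.2 j)
      = y (Sum.inr (j, p.1)) * φ (∑ r : Fin d, y (Sum.inl (p.2, r)) * y (Sum.inr (j, r)))
    simp only [hy_def, Sum.elim_inr, Sum.elim_inl]
    congr 2
  apply le_antisymm (hub M)
  -- find a nonzero minor
  obtain ⟨ργ, _, hργ⟩ := Finset.exists_ne_zero_of_sum_ne_zero hfAB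
  have hdet : (Matrix.of fun t t' => M (ργ.1 t) (ργ.2 t')).det ≠ 0 := by
    intro h0
    apply hργ
    have : (Matrix.of fun t t' => ent y (ργ.1 t) (ργ.2 t'))
        = (Matrix.of fun t t' => M (ργ.1 t) (ργ.2 t')) := by
      ext t t'
      exact (hMent _ _).symm
    rw [this, h0]
    norm_num
  exact hsub M ργ.1 ργ.2 hdet
end

section
/- Define $h(W,b,v,X)=\psi(X^TW+\mathbb{1}_n b^T)v$ with $\psi$ continuously differentiable applied entrywise, $W\in\mathbb{R}^{d\times m}$, $b,v\in\mathbb{R}^m$, $X\in\mathbb{R}^{d\times n}$. If $m(d+2)<n$, then for every $X$ the image of $(W,b,v)\mapsto h(W,b,v,X)$ has Lebesgue measure zero in $\mathbb{R}^n$; in particular it is not surjective. -/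
open MeasureTheory


/-- Memory capacity upper bound: with `ψ` continuously differentiable applied
entrywise and `h(W,b,v,X) = ψ(XᵀW + 𝟙ₙ bᵀ) v`, if `m(d+2) < n` then for every
`X` the image of `(W,b,v) ↦ h(W,b,v,X)` has Lebesgue measure zero in `ℝⁿ`;
in particular it is not surjective. -/
theorem stmt18 (d m n : ℕ) (ψ : ℝ → ℝ) (hψ : ContDiff ℝ 1 ψ)
    (hsize : m * (d + 2) < n) :
    ∀ X : Fin d → Fin n → ℝ,
      MeasureTheory.volume
        (Set.range (fun p : (Fin d → Fin m → ℝ) × (Fin m → ℝ) × (Fin m → ℝ) =>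
          (fun j : Fin n =>
            ∑ i : Fin m, p.2.2 i * ψ ((∑ r : Fin d, X r j * p.1 r i) + p.2.1 i)))) = 0 ∧
      ¬ Function.Surjective
          (fun p : (Fin d → Fin m → ℝ) × (Fin m → ℝ) × (Fin m → ℝ) =>
            (fun j : Fin n =>
              ∑ i : Fin m, p.2.2 i * ψ ((∑ r : Fin d, X r j * p.1 r i) + p.2.1 i))) := by
  intro X
  set P := (Fin d → Fin m → ℝ) × (Fin m → ℝ) × (Fin m → ℝ) with hP
  set h : P → (Fin n → ℝ) := fun p => fun j : Fin n =>
      ∑ i : Fin m, p.2.2 i * ψ ((∑ r : Fin d, X r j * p.1 r i) + p.2.1 i) with hh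
  have hψd : Differentiable ℝ ψ := hψ.differentiable one_ne_zero
  have hhd : Differentiable ℝ h := by
    apply differentiable_pi.2
    intro j
    apply Differentiable.fun_sum
    intro i _
    change Differentiable ℝ (fun y : (Fin d → Fin m → ℝ) × (Fin m → ℝ) × (Fin m → ℝ) =>
      y.2.2 i * ψ ((∑ r : Fin d, X r j * y.1 r i) + y.2.1 i))
    fun_prop
  set k := Module.finrank ℝ P with hkdef
  have hk : k = m * (d + 2) := by
    show Module.finrank ℝ ((Fin d → Fin m → ℝ) × (Fin m → ℝ) × (Fin m → ℝ)) = m * (d + 2)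
    simp [Module.finrank_prod, Module.finrank_pi_fintype, Module.finrank_pi]
    ring
  have hkn : k < n := hk ▸ hsize
  have hn : 0 < n := lt_of_le_of_lt (Nat.zero_le _) hkn
  let e : P ≃ₗ[ℝ] (Fin k → ℝ) := (Module.finBasis ℝ P).equivFun
  let R : (Fin n → ℝ) →L[ℝ] P :=
    (e.symm.toLinearMap ∘ₗ LinearMap.funLeft ℝ ℝ (Fin.castLE hkn.le)).toContinuousLinearMap
  have hRdef : ∀ x : Fin n → ℝ, R x = e.symm (fun i : Fin k => x (Fin.castLE hkn.le i)) := by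
    intro x; rfl
  set g : (Fin n → ℝ) → (Fin n → ℝ) := h ∘ R with hg
  have hgd : Differentiable ℝ g := hhd.comp R.differentiable
  let jn : Fin n := ⟨n - 1, by omega⟩
  let s : Submodule ℝ (Fin n → ℝ) := LinearMap.ker (LinearMap.proj (R := ℝ) jn)
  have hsne : s ≠ ⊤ := by
    intro ht
    have hmem : Pi.single jn (1 : ℝ) ∈ s := ht ▸ Submodule.mem_top
    simp [s, LinearMap.mem_ker] at hmem
  have hs0 : volume (s : Set (Fin n → ℝ)) = 0 :=
    Measure.addHaar_submodule volume s hsne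
  have himg : volume (g '' (s : Set (Fin n → ℝ))) = 0 :=
    addHaar_image_eq_zero_of_differentiableOn_of_addHaar_eq_zero volume
      hgd.differentiableOn hs0
  have hsub : Set.range h ⊆ g '' (s : Set (Fin n → ℝ)) := by
    rintro y ⟨p, rfl⟩
    refine ⟨fun j => if hj : (j : ℕ) < k then e p ⟨j, hj⟩ else 0, ?_, ?_⟩
    · simp only [s, SetLike.mem_coe, LinearMap.mem_ker, LinearMap.proj_apply]
      have : ¬ ((jn : ℕ) < k) := by simp [jn]; omega
      simp [this]
    · have hx : (fun i : Fin k =>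
          (fun j : Fin n => if hj : (j : ℕ) < k then e p ⟨j, hj⟩ else 0)
            (Fin.castLE hkn.le i)) = e p := by
        funext i
        have hi : ((Fin.castLE hkn.le i : Fin n) : ℕ) < k := i.isLt
        simp only [hi, dif_pos]
        congr 1
      simp only [hg, Function.comp_apply, hRdef, hx, LinearEquiv.symm_apply_apply]
  have hrange : volume (Set.range h) = 0 :=
    le_antisymm (le_trans (measure_mono hsub) himg.le) (zero_le)
  refine ⟨hrange, ?_⟩
  intro hsurj
  rw [Set.range_eq_univ.mpr hsurj] at hrange
  exact isOpen_univ.measure_ne_zero volume Set.univ_nonempty hrange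
end
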